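/- Let x_1,...,x_N : [0,∞) → ℝ be a solution of the first-order cooperative system with communication failures (fixed scaling) on the real line. Let D(0) := max_{i,j} |x_i(0) − x_j(0)|, let φ_max be the maximum of φ on [0, D(0)] and set K_max := φ_max. For α, z ∈ ℝ and τ ≥ 0 define ψ_L(α, z, τ) := α + e^{−K_max τ}(z − α). Let T > 0, θ ≥ 0 and suppose x_j(θ) ≥ α for all j ∈ {1,...,N}. If there exist an index i and τ* ∈ [0, T] such that x_i(θ + τ*) ≥ ψ_L(α, z, τ*), then x_i(θ + τ) ≥ ψ_L(α, z, τ) for all τ ∈ [τ*, T]. -/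

import Mathlib

open MeasureTheory Set Filter

open Topology

/-- Elementary per-term bound. -/
lemma lb_key {m A d e Q : ℝ} (hm : 0 ≤ m) (hm1 : m ≤ 1) (hA : 0 ≤ A) (hAQ : A ≤ Q)
    (hde : d ≤ e) (he : 0 ≤ e) : m * A * d ≤ Q * e := by
  rcases le_or_gt d 0 with hd | hd
  · have h1 : m * A * d ≤ 0 := mul_nonpos_of_nonneg_of_nonpos (mul_nonneg hm hA) hd
    exact h1.trans (mul_nonneg (hA.trans hAQ) he)
  · nlinarith [mul_nonneg (mul_nonneg (sub_nonneg.2 hm1) hA) hd.le,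
      mul_nonneg hA (sub_nonneg.2 hde), mul_nonneg (sub_nonneg.2 hAQ) he]

/-- If `x z - x t = ∫_t^z v` with `v ≤ w` near `t` and `w` continuous at `t`,
then right slopes of `x` at `t` are eventually `< r` whenever `w t < r`. -/
lemma lb_slope_ev {x v w : ℝ → ℝ} {t r : ℝ}
    (hxv : ∀ z, t ≤ z → x z - x t = ∫ s in t..z, v s)
    (hv_int : ∀ z, t ≤ z → IntervalIntegrable v volume t z)
    (hvw : ∀ s, t ≤ s → v s ≤ w s)
    (hw : ContinuousWithinAt w (Ici t) t)
    (hr : w t < r) : ∀ᶠ z in 𝓝[>] t, slope x t z < r := by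
  set r' : ℝ := (w t + r) / 2 with hr'def
  have hr1 : w t < r' := by simp only [hr'def]; linarith
  have hr2 : r' < r := by simp only [hr'def]; linarith
  have hmem : w ⁻¹' (Iio r') ∈ 𝓝[Ici t] t := hw (Iio_mem_nhds hr1)
  rw [Metric.mem_nhdsWithin_iff] at hmem
  obtain ⟨δ, hδ, hball⟩ := hmem
  filter_upwards [Ioo_mem_nhdsGT_of_mem (show t ∈ Ico t (t + δ) by constructor <;> simp [hδ.le, hδ])]
    with z hz
  have hzt : t < z := hz.1
  have hzδ : z < t + δ := hz.2
  have hwlt : ∀ s ∈ Icc t z, v s < r' := by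
    intro s hs
    have hsball : s ∈ Metric.ball t δ ∩ Ici t := by
      constructor
      · rw [Metric.mem_ball, Real.dist_eq, abs_of_nonneg (by linarith [hs.1])]
        linarith [hs.2]
      · exact hs.1
    exact lt_of_le_of_lt (hvw s hs.1) (hball hsball)
  have hint : (∫ s in t..z, v s) ≤ ∫ _ in t..z, r' :=
    intervalIntegral.integral_mono_on hzt.le (hv_int z hzt.le) intervalIntegrable_const
      (fun s hs => (hwlt s hs).le)
  rw [intervalIntegral.integral_const, smul_eq_mul] at hint
  have hx : x z - x t ≤ (z - t) * r' := (hxv z hzt.le) ▸ hint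
  rw [slope_def_field]
  rw [div_lt_iff₀ (by linarith : (0:ℝ) < z - t)]
  calc x z - x t ≤ (z - t) * r' := hx
    _ < r * (z - t) := by rw [mul_comm]; exact (mul_lt_mul_of_pos_right hr2 (by linarith))

lemma lb_int (N : ℕ) (φ : ℝ → ℝ)
    (hφ_cont : ContinuousOn φ (Ici 0)) (hφ_nonneg : ∀ r : ℝ, 0 ≤ r → 0 ≤ φ r)
    (M : Fin N → Fin N → ℝ → ℝ) (hM_meas : ∀ i j, Measurable (M i j))
    (hM_range : ∀ i j, ∀ t : ℝ, 0 ≤ t → M i j t ∈ Icc (0:ℝ) 1)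
    (x : Fin N → ℝ → ℝ) (hx_cont : ∀ i, ContinuousOn (x i) (Ici 0))
    (i : Fin N) {a b : ℝ} (ha : 0 ≤ a) (hab : a ≤ b) :
    IntervalIntegrable
      (fun s => (N : ℝ)⁻¹ * ∑ j, M i j s * φ |x i s - x j s| * (x j s - x i s))
      volume a b := by
  have hIcc : Icc a b ⊆ Ici (0:ℝ) := fun s hs => le_trans ha hs.1
  have hφx : ∀ j, ContinuousOn (fun s => φ |x i s - x j s|) (Ici 0) := fun j =>
    hφ_cont.comp (((hx_cont i).sub (hx_cont j)).abs) (fun s _ => mem_Ici.2 (abs_nonneg _))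
  rw [intervalIntegrable_iff_integrableOn_Icc_of_le hab]
  have hG : IntegrableOn (fun s => (N : ℝ)⁻¹ * ∑ j, φ |x i s - x j s| * |x j s - x i s|)
      (Icc a b) volume := by
    apply ContinuousOn.integrableOn_compact isCompact_Icc
    apply ContinuousOn.mul continuousOn_const
    apply continuousOn_finset_sum
    intro j _
    exact ((hφx j).mul (((hx_cont j).sub (hx_cont i)).abs)).mono hIcc
  apply Integrable.mono hG
  · apply AEStronglyMeasurable.const_mul
    apply Finset.aestronglyMeasurable_fun_sum
    intro j _
    apply AEStronglyMeasurable.mul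
    apply AEStronglyMeasurable.mul
    · exact ((hM_meas i j).aemeasurable).aestronglyMeasurable
    · exact (((hφx j).mono hIcc).aemeasurable measurableSet_Icc).aestronglyMeasurable
    · exact (((((hx_cont j).sub (hx_cont i))).mono hIcc).aemeasurable
        measurableSet_Icc).aestronglyMeasurable
  · filter_upwards [ae_restrict_mem measurableSet_Icc] with s hs
    have hs0 : (0:ℝ) ≤ s := hIcc hs
    have habs : ∀ j, |M i j s * φ |x i s - x j s| * (x j s - x i s)| ≤
        φ |x i s - x j s| * |x j s - x i s| := by
      intro j
      rw [abs_mul, abs_mul]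
      have hM01 := hM_range i j s hs0
      have hφnn : 0 ≤ φ |x i s - x j s| := hφ_nonneg _ (abs_nonneg _)
      rw [abs_of_nonneg hM01.1, abs_of_nonneg hφnn]
      have : M i j s * φ |x i s - x j s| ≤ 1 * φ |x i s - x j s| :=
        mul_le_mul_of_nonneg_right hM01.2 hφnn
      calc M i j s * φ |x i s - x j s| * |x j s - x i s|
          ≤ 1 * φ |x i s - x j s| * |x j s - x i s| :=
            mul_le_mul_of_nonneg_right this (abs_nonneg _)
        _ = φ |x i s - x j s| * |x j s - x i s| := by ring
    have h1 : |(N : ℝ)⁻¹ * ∑ j, M i j s * φ |x i s - x j s| * (x j s - x i s)| ≤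
        (N : ℝ)⁻¹ * ∑ j, φ |x i s - x j s| * |x j s - x i s| := by
      rw [abs_mul, abs_of_nonneg (by positivity : (0:ℝ) ≤ (N:ℝ)⁻¹)]
      apply mul_le_mul_of_nonneg_left _ (by positivity : (0:ℝ) ≤ (N:ℝ)⁻¹)
      exact (Finset.abs_sum_le_sum_abs _ _).trans (Finset.sum_le_sum fun j _ => habs j)
    calc ‖(N : ℝ)⁻¹ * ∑ j, M i j s * φ |x i s - x j s| * (x j s - x i s)‖
        = |(N : ℝ)⁻¹ * ∑ j, M i j s * φ |x i s - x j s| * (x j s - x i s)| := rfl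
      _ ≤ (N : ℝ)⁻¹ * ∑ j, φ |x i s - x j s| * |x j s - x i s| := h1
      _ ≤ ‖(N : ℝ)⁻¹ * ∑ j, φ |x i s - x j s| * |x j s - x i s|‖ := le_abs_self _

lemma lb_rep (N : ℕ) (φ : ℝ → ℝ)
    (hφ_cont : ContinuousOn φ (Ici 0)) (hφ_nonneg : ∀ r : ℝ, 0 ≤ r → 0 ≤ φ r)
    (M : Fin N → Fin N → ℝ → ℝ) (hM_meas : ∀ i j, Measurable (M i j))
    (hM_range : ∀ i j, ∀ t : ℝ, 0 ≤ t → M i j t ∈ Icc (0:ℝ) 1)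
    (x : Fin N → ℝ → ℝ) (hx_cont : ∀ i, ContinuousOn (x i) (Ici 0))
    (hx_sol : ∀ i, ∀ t : ℝ, 0 ≤ t → x i t = x i 0 +
      ∫ s in (0:ℝ)..t,
        (N : ℝ)⁻¹ * ∑ j, M i j s * φ |x i s - x j s| * (x j s - x i s))
    (i : Fin N) {t z : ℝ} (ht : 0 ≤ t) (htz : t ≤ z) :
    x i z - x i t = ∫ s in t..z,
      (N : ℝ)⁻¹ * ∑ j, M i j s * φ |x i s - x j s| * (x j s - x i s) := by
  have h1 := lb_int N φ hφ_cont hφ_nonneg M hM_meas hM_range x hx_cont i le_rfl ht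
  have h2 := lb_int N φ hφ_cont hφ_nonneg M hM_meas hM_range x hx_cont i ht htz
  have hadd := intervalIntegral.integral_add_adjacent_intervals h1 h2
  have e1 := hx_sol i t ht
  have e2 := hx_sol i z (ht.trans htz)
  rw [e1, e2, ← hadd]; ring

lemma lb_upper_inv (N : ℕ) (hN : 2 ≤ N) (φ : ℝ → ℝ)
    (hφ_cont : ContinuousOn φ (Ici 0)) (hφ_nonneg : ∀ r : ℝ, 0 ≤ r → 0 ≤ φ r)
    (M : Fin N → Fin N → ℝ → ℝ) (hM_meas : ∀ i j, Measurable (M i j))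
    (hM_range : ∀ i j, ∀ t : ℝ, 0 ≤ t → M i j t ∈ Icc (0:ℝ) 1)
    (x : Fin N → ℝ → ℝ) (hx_cont : ∀ i, ContinuousOn (x i) (Ici 0))
    (hx_sol : ∀ i, ∀ t : ℝ, 0 ≤ t → x i t = x i 0 +
      ∫ s in (0:ℝ)..t,
        (N : ℝ)⁻¹ * ∑ j, M i j s * φ |x i s - x j s| * (x j s - x i s))
    (θ β : ℝ) (hθ : 0 ≤ θ) (hβ : ∀ j, x j θ ≤ β) :
    ∀ t, θ ≤ t → ∀ j, x j t ≤ β := by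
  have hNE : (Finset.univ : Finset (Fin N)).Nonempty :=
    ⟨⟨0, by omega⟩, Finset.mem_univ _⟩
  intro b hb j
  set f : ℝ → ℝ := fun t => Finset.univ.sup' hNE (fun k => x k t) with hfdef
  have hxf : ∀ k t, x k t ≤ f t := fun k t => Finset.le_sup' (f := fun k' => x k' t) (Finset.mem_univ k)
  suffices h : f b ≤ β from (hxf j b).trans h
  have hfc : ContinuousOn f (Ici 0) :=
    ContinuousOn.finset_sup'_apply hNE (fun k _ => hx_cont k)
  set Q : ℝ → ℝ := fun s => ∑ p : Fin N × Fin N, φ |x p.1 s - x p.2 s| with hQdef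
  have hQc : ContinuousOn Q (Ici 0) := by
    apply continuousOn_finset_sum
    intro p _
    exact hφ_cont.comp (((hx_cont p.1).sub (hx_cont p.2)).abs)
      (fun s _ => mem_Ici.2 (abs_nonneg _))
  have hQge : ∀ (k l : Fin N) (s : ℝ), φ |x k s - x l s| ≤ Q s := by
    intro k l s
    exact Finset.single_le_sum (f := fun p : Fin N × Fin N => φ |x p.1 s - x p.2 s|)
      (fun p _ => hφ_nonneg _ (abs_nonneg _)) (Finset.mem_univ (k, l))
  -- velocity bound
  have hVbound : ∀ (k : Fin N) (s : ℝ), 0 ≤ s →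
      (N : ℝ)⁻¹ * ∑ l, M k l s * φ |x k s - x l s| * (x l s - x k s) ≤
        Q s * (f s - x k s) := by
    intro k s hs
    have hsum : (∑ l, M k l s * φ |x k s - x l s| * (x l s - x k s)) ≤
        ∑ _l : Fin N, Q s * (f s - x k s) := by
      apply Finset.sum_le_sum
      intro l _
      exact lb_key (hM_range k l s hs).1 (hM_range k l s hs).2
        (hφ_nonneg _ (abs_nonneg _)) (hQge k l s)
        (by linarith [hxf l s] : x l s - x k s ≤ f s - x k s)
        (by linarith [hxf k s] : (0:ℝ) ≤ f s - x k s)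
    rw [Finset.sum_const, Finset.card_univ, Fintype.card_fin, nsmul_eq_mul] at hsum
    calc (N : ℝ)⁻¹ * ∑ l, M k l s * φ |x k s - x l s| * (x l s - x k s)
        ≤ (N : ℝ)⁻¹ * ((N:ℝ) * (Q s * (f s - x k s))) :=
          mul_le_mul_of_nonneg_left hsum (by positivity)
      _ = Q s * (f s - x k s) := by field_simp
  -- boundary lemma with constant barrier
  have main : ∀ ⦃u⦄, u ∈ Icc θ b → f u ≤ β := by
    apply image_le_of_liminf_slope_right_le_deriv_boundary
      (f := f) (a := θ) (b := b) (B := fun _ => β) (B' := fun _ => (0:ℝ))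
    · exact hfc.mono (fun s hs => le_trans hθ hs.1)
    · exact Finset.sup'_le hNE _ (fun k _ => hβ k)
    · exact continuousOn_const
    · intro u _; exact (hasDerivWithinAt_const u _ β)
    · -- slope bound
      intro t ht r hr
      have ht0 : (0:ℝ) ≤ t := hθ.trans ht.1
      have hIcit : Ici t ⊆ Ici (0:ℝ) := fun s hs => le_trans ht0 hs
      have hev : ∀ k : Fin N, ∀ᶠ zz in 𝓝[>] t,
          slope (x k) t zz + (x k t - f t) / (zz - t) < r := by
        intro k
        have hxv : ∀ zz, t ≤ zz → x k zz - x k t = ∫ s in t..zz,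
            (N : ℝ)⁻¹ * ∑ l, M k l s * φ |x k s - x l s| * (x l s - x k s) :=
          fun zz hzz => lb_rep N φ hφ_cont hφ_nonneg M hM_meas hM_range x hx_cont hx_sol k ht0 hzz
        have hv_int : ∀ zz, t ≤ zz → IntervalIntegrable
            (fun s => (N : ℝ)⁻¹ * ∑ l, M k l s * φ |x k s - x l s| * (x l s - x k s))
            volume t zz :=
          fun zz hzz => lb_int N φ hφ_cont hφ_nonneg M hM_meas hM_range x hx_cont k ht0 hzz
        have hvw : ∀ s, t ≤ s →
            (N : ℝ)⁻¹ * ∑ l, M k l s * φ |x k s - x l s| * (x l s - x k s) ≤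
              Q s * (f s - x k s) := fun s hs => hVbound k s (ht0.trans hs)
        have hwct : ContinuousWithinAt (fun s => Q s * (f s - x k s)) (Ici t) t :=
          ((hQc.mul (hfc.sub (hx_cont k))).continuousWithinAt (mem_Ici.2 ht0)).mono hIcit
        rcases eq_or_lt_of_le (hxf k t) with hk | hk
        · -- maximal agent
          have hw0 : Q t * (f t - x k t) < r := by
            rw [← hk]; simpa using hr
          have := lb_slope_ev hxv hv_int hvw hwct hw0
          filter_upwards [this] with zz hzz
          rw [hk]
          simpa using hzz
        · -- non-maximal agent
          set c : ℝ := Q t * (f t - x k t) with hcdef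
          have hev1 := lb_slope_ev hxv hv_int hvw hwct (lt_add_one c)
          have htend : Tendsto (fun zz => (x k t - f t) / (zz - t)) (𝓝[>] t) atBot := by
            have h1 : Tendsto (fun zz => zz - t) (𝓝[>] t) (𝓝[>] (0:ℝ)) := by
              apply tendsto_nhdsWithin_of_tendsto_nhds_of_eventually_within
              · have : Tendsto (fun zz : ℝ => zz - t) (𝓝 t) (𝓝 (t - t)) :=
                  (continuous_id.sub continuous_const).tendsto t
                rw [sub_self] at this
                exact this.mono_left nhdsWithin_le_nhds
              · filter_upwards [self_mem_nhdsWithin] with zz hzz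
                exact sub_pos.2 (show t < zz from hzz)
            have h2 : Tendsto (fun zz => (zz - t)⁻¹) (𝓝[>] t) atTop :=
              tendsto_inv_nhdsGT_zero.comp h1
            have h3 := Tendsto.const_mul_atTop_of_neg (sub_neg.2 hk) h2
            simpa [div_eq_mul_inv] using h3
          have hev2 : ∀ᶠ zz in 𝓝[>] t, (x k t - f t) / (zz - t) < r - (c + 1) :=
            htend.eventually (eventually_lt_atBot _)
          filter_upwards [hev1, hev2] with zz h1 h2
          linarith
        -- end cases
      have hall := (eventually_all).2 hev
      have := hall.and self_mem_nhdsWithin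
      apply Eventually.frequently
      filter_upwards [this] with zz ⟨hk, hzz⟩
      have hzt : t < zz := hzz
      obtain ⟨k₀, -, hk₀⟩ := Finset.exists_mem_eq_sup' hNE (fun k => x k zz)
      have : slope f t zz = slope (x k₀) t zz + (x k₀ t - f t) / (zz - t) := by
        rw [slope_def_field, slope_def_field]
        rw [show f zz = x k₀ zz from hk₀]
        field_simp
        ring
      rw [this]
      exact hk k₀
  exact main ⟨hb, le_rfl⟩

lemma lb_lower_inv (N : ℕ) (hN : 2 ≤ N) (φ : ℝ → ℝ)
    (hφ_cont : ContinuousOn φ (Ici 0)) (hφ_nonneg : ∀ r : ℝ, 0 ≤ r → 0 ≤ φ r)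
    (M : Fin N → Fin N → ℝ → ℝ) (hM_meas : ∀ i j, Measurable (M i j))
    (hM_range : ∀ i j, ∀ t : ℝ, 0 ≤ t → M i j t ∈ Icc (0:ℝ) 1)
    (x : Fin N → ℝ → ℝ) (hx_cont : ∀ i, ContinuousOn (x i) (Ici 0))
    (hx_sol : ∀ i, ∀ t : ℝ, 0 ≤ t → x i t = x i 0 +
      ∫ s in (0:ℝ)..t,
        (N : ℝ)⁻¹ * ∑ j, M i j s * φ |x i s - x j s| * (x j s - x i s))
    (θ α : ℝ) (hθ : 0 ≤ θ) (hα : ∀ j, α ≤ x j θ) :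
    ∀ t, θ ≤ t → ∀ j, α ≤ x j t := by
  set y : Fin N → ℝ → ℝ := fun k u => -(x k u) with hydef
  have hy_cont : ∀ i, ContinuousOn (y i) (Ici 0) := fun i => (hx_cont i).neg
  have hy_sol : ∀ i, ∀ t : ℝ, 0 ≤ t → y i t = y i 0 +
      ∫ s in (0:ℝ)..t,
        (N : ℝ)⁻¹ * ∑ j, M i j s * φ |y i s - y j s| * (y j s - y i s) := by
    intro i t ht
    have key : ∀ s : ℝ,
        (N : ℝ)⁻¹ * ∑ j, M i j s * φ |y i s - y j s| * (y j s - y i s) =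
        -((N : ℝ)⁻¹ * ∑ j, M i j s * φ |x i s - x j s| * (x j s - x i s)) := by
      intro s
      rw [← mul_neg, ← Finset.sum_neg_distrib]
      congr 1
      apply Finset.sum_congr rfl
      intro l _
      show M i l s * φ |(-(x i s)) - (-(x l s))| * ((-(x l s)) - (-(x i s))) =
        -(M i l s * φ |x i s - x l s| * (x l s - x i s))
      rw [neg_sub_neg, neg_sub_neg, abs_sub_comm]
      ring
    simp only [key]
    rw [intervalIntegral.integral_neg]
    have := hx_sol i t ht
    show -(x i t) = -(x i 0) + -∫ s in (0:ℝ)..t,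
      (N : ℝ)⁻¹ * ∑ j, M i j s * φ |x i s - x j s| * (x j s - x i s)
    linarith
  have := lb_upper_inv N hN φ hφ_cont hφ_nonneg M hM_meas hM_range y hy_cont hy_sol
    θ (-α) hθ (fun j => neg_le_neg (hα j))
  intro t ht j
  have h := this t ht j
  simpa [hydef] using neg_le_neg h

/-- Left barrier lemma on the real line: if all agents start
(at time `θ`) above `α` and agent `i` crosses the barrier
`ψ_L(α, z, τ) = α + e^{-K_max τ}(z - α)` at some time `τ* ∈ [0, T]`, then it
stays above the barrier on `[τ*, T]`. -/
theorem left_barrier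
    (N : ℕ) (hN : 2 ≤ N)
    (φ : ℝ → ℝ)
    (hφ_lip : ∃ K : NNReal, LipschitzOnWith K φ (Ici 0))
    (hφ_pos : ∀ r : ℝ, 0 ≤ r → 0 < φ r)
    (M : Fin N → Fin N → ℝ → ℝ)
    (hM_meas : ∀ i j, Measurable (M i j))
    (hM_range : ∀ i j, ∀ t : ℝ, 0 ≤ t → M i j t ∈ Icc (0:ℝ) 1)
    (x : Fin N → ℝ → ℝ)
    (hx_cont : ∀ i, ContinuousOn (x i) (Ici 0))
    (hx_sol : ∀ i, ∀ t : ℝ, 0 ≤ t → x i t = x i 0 +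
      ∫ s in (0:ℝ)..t,
        (N : ℝ)⁻¹ * ∑ j, M i j s * φ |x i s - x j s| * (x j s - x i s))
    (D₀ : ℝ) (hD₀ : D₀ = ⨆ i, ⨆ j, |x i 0 - x j 0|)
    (Kmax : ℝ) (hKmax : Kmax = sSup (φ '' Icc 0 D₀))
    (ψL : ℝ → ℝ → ℝ → ℝ)
    (hψL : ∀ α z τ, ψL α z τ = α + Real.exp (-(Kmax * τ)) * (z - α))
    (α z : ℝ) (T : ℝ) (hT : 0 < T) (θ : ℝ) (hθ : 0 ≤ θ)
    (hbelow : ∀ j, α ≤ x j θ)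
    (i : Fin N) (τstar : ℝ) (hτstar : τstar ∈ Icc 0 T)
    (hcross : ψL α z τstar ≤ x i (θ + τstar)) :
    ∀ τ ∈ Icc τstar T, ψL α z τ ≤ x i (θ + τ) := by
  obtain ⟨K, hK⟩ := hφ_lip
  have hφ_cont : ContinuousOn φ (Ici 0) := hK.continuousOn
  have hφ_nonneg : ∀ r : ℝ, 0 ≤ r → 0 ≤ φ r := fun r hr => (hφ_pos r hr).le
  have hNE : (Finset.univ : Finset (Fin N)).Nonempty := ⟨⟨0, by omega⟩, Finset.mem_univ _⟩
  -- D₀ facts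
  have hd0 : ∀ k l : Fin N, |x k 0 - x l 0| ≤ D₀ := by
    intro k l
    rw [hD₀]
    have bdd1 : ∀ k : Fin N, BddAbove (range fun l => |x k 0 - x l 0|) :=
      fun k => (Set.finite_range _).bddAbove
    have bdd2 : BddAbove (range fun k : Fin N => ⨆ l, |x k 0 - x l 0|) :=
      (Set.finite_range _).bddAbove
    exact (le_ciSup (bdd1 k) l).trans (le_ciSup bdd2 k)
  have hD0nn : (0:ℝ) ≤ D₀ := by
    have := hd0 i i
    simpa using this
  -- diameter bound for all times
  set M₀ : ℝ := Finset.univ.sup' hNE (fun k => x k 0) with hM₀def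
  set m₀ : ℝ := Finset.univ.inf' hNE (fun k => x k 0) with hm₀def
  have hMm : M₀ - m₀ ≤ D₀ := by
    obtain ⟨k₀, -, hk₀⟩ := Finset.exists_mem_eq_sup' hNE (fun k => x k 0)
    obtain ⟨l₀, -, hl₀⟩ := Finset.exists_mem_eq_inf' hNE (fun k => x k 0)
    rw [hM₀def, hm₀def, hk₀, hl₀]
    exact (le_abs_self _).trans (hd0 k₀ l₀)
  have hup := lb_upper_inv N hN φ hφ_cont hφ_nonneg M hM_meas hM_range x hx_cont hx_sol
    0 M₀ le_rfl (fun k => Finset.le_sup' (f := fun k' => x k' 0) (Finset.mem_univ k))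
  have hlo := lb_lower_inv N hN φ hφ_cont hφ_nonneg M hM_meas hM_range x hx_cont hx_sol
    0 m₀ le_rfl (fun k => Finset.inf'_le (fun k' => x k' 0) (Finset.mem_univ k))
  have hDiam : ∀ t : ℝ, 0 ≤ t → ∀ k l : Fin N, |x k t - x l t| ≤ D₀ := by
    intro t ht k l
    have h1 := hup t ht k
    have h2 := hup t ht l
    have h3 := hlo t ht k
    have h4 := hlo t ht l
    rw [abs_le]
    constructor <;> [linarith [hMm]; linarith [hMm]]
  -- Kmax facts
  have hφK : ∀ d : ℝ, 0 ≤ d → d ≤ D₀ → φ d ≤ Kmax := by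
    intro d h1 h2
    rw [hKmax]
    exact le_csSup ((isCompact_Icc.image_of_continuousOn
      (hφ_cont.mono (fun s hs => hs.1))).bddAbove) (mem_image_of_mem φ ⟨h1, h2⟩)
  have hKnn : (0:ℝ) ≤ Kmax := ((hφ_pos 0 le_rfl).le).trans (hφK 0 le_rfl hD0nn)
  -- all agents stay above α after θ
  have hαinv := lb_lower_inv N hN φ hφ_cont hφ_nonneg M hM_meas hM_range x hx_cont hx_sol
    θ α hθ hbelow
  have hτ0 : (0:ℝ) ≤ τstar := hτstar.1
  -- velocity lower bound for agent i after θ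
  have hVlow : ∀ s : ℝ, θ ≤ s →
      -((N : ℝ)⁻¹ * ∑ j, M i j s * φ |x i s - x j s| * (x j s - x i s)) ≤
        Kmax * (x i s - α) := by
    intro s hs
    have hs0 : (0:ℝ) ≤ s := hθ.trans hs
    rw [← mul_neg, ← Finset.sum_neg_distrib]
    have hsum : (∑ j, -(M i j s * φ |x i s - x j s| * (x j s - x i s))) ≤
        ∑ _j : Fin N, Kmax * (x i s - α) := by
      apply Finset.sum_le_sum
      intro l _
      have : -(M i l s * φ |x i s - x l s| * (x l s - x i s)) =
          M i l s * φ |x i s - x l s| * (x i s - x l s) := by ring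
      rw [this]
      exact lb_key (hM_range i l s hs0).1 (hM_range i l s hs0).2
        (hφ_nonneg _ (abs_nonneg _)) (hφK _ (abs_nonneg _) (hDiam s hs0 i l))
        (by linarith [hαinv s hs l] : x i s - x l s ≤ x i s - α)
        (by linarith [hαinv s hs i] : (0:ℝ) ≤ x i s - α)
    rw [Finset.sum_const, Finset.card_univ, Fintype.card_fin, nsmul_eq_mul] at hsum
    calc (N : ℝ)⁻¹ * ∑ j, -(M i j s * φ |x i s - x j s| * (x j s - x i s))
        ≤ (N : ℝ)⁻¹ * ((N:ℝ) * (Kmax * (x i s - α))) :=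
          mul_le_mul_of_nonneg_left hsum (by positivity)
      _ = Kmax * (x i s - α) := by
          have : (N:ℝ) ≠ 0 := by positivity
          field_simp
  -- the barrier function
  set F : ℝ → ℝ := fun τ => α - x i (θ + τ) with hFdef
  have hXc : ContinuousOn (fun s => x i (θ + s)) (Ici 0) :=
    (hx_cont i).comp ((continuous_const.add continuous_id).continuousOn)
      (fun s hs => add_nonneg hθ hs)
  have hFc : ContinuousOn F (Icc τstar T) :=
    (continuousOn_const.sub (hXc.mono (fun s hs => hτ0.trans hs.1)))
  set Vi : ℝ → ℝ := fun u =>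
    (N : ℝ)⁻¹ * ∑ j, M i j u * φ |x i u - x j u| * (x j u - x i u) with hVidef
  -- slope estimate for F, at every point of [τstar, T)
  have hf' : ∀ t ∈ Ico τstar T, ∀ r, Kmax * (x i (θ + t) - α) < r →
      ∃ᶠ zz in 𝓝[>] t, slope F t zz < r := by
    intro t ht r hr
    have ht0 : (0:ℝ) ≤ t := hτ0.trans ht.1
    apply Eventually.frequently
    have hxv : ∀ zz, t ≤ zz → F zz - F t = ∫ s in t..zz, -(Vi (θ + s)) := by
      intro zz hzz
      have h1 : x i (θ + zz) - x i (θ + t) = ∫ s in (θ + t)..(θ + zz), Vi s :=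
        lb_rep N φ hφ_cont hφ_nonneg M hM_meas hM_range x hx_cont hx_sol i
          (by linarith : (0:ℝ) ≤ θ + t) (by linarith : θ + t ≤ θ + zz)
      have h2 : (∫ s in t..zz, Vi (θ + s)) = ∫ s in (θ + t)..(θ + zz), Vi s :=
        intervalIntegral.integral_comp_add_left Vi θ
      rw [intervalIntegral.integral_neg, h2, ← h1]
      show (α - x i (θ + zz)) - (α - x i (θ + t)) = -(x i (θ + zz) - x i (θ + t))
      ring
    have hv_int : ∀ zz, t ≤ zz → IntervalIntegrable (fun s => -(Vi (θ + s))) volume t zz := by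
      intro zz hzz
      have h1 : IntervalIntegrable Vi volume (θ + t) (θ + zz) :=
        lb_int N φ hφ_cont hφ_nonneg M hM_meas hM_range x hx_cont i
          (by linarith : (0:ℝ) ≤ θ + t) (by linarith : θ + t ≤ θ + zz)
      have h2 := (h1.comp_add_left θ)
      simp only [add_sub_cancel_left] at h2
      exact h2.neg
    have hvw : ∀ s, t ≤ s → -(Vi (θ + s)) ≤ Kmax * (x i (θ + s) - α) :=
      fun s hs => hVlow (θ + s) (by linarith)
    have hw : ContinuousWithinAt (fun s => Kmax * (x i (θ + s) - α)) (Ici t) t :=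
      (((continuousOn_const.mul (hXc.sub continuousOn_const)).continuousWithinAt
        (mem_Ici.2 ht0))).mono (fun s hs => ht0.trans hs)
    exact lb_slope_ev hxv hv_int hvw hw hr
  -- Gronwall with perturbed barrier
  have hmain : ∀ ε : ℝ, 0 < ε → ∀ τ ∈ Icc τstar T,
      F τ ≤ F τstar * Real.exp (-Kmax * (τ - τstar)) + ε * (τ - τstar + 1) := by
    intro ε hε
    set B : ℝ → ℝ := fun τ =>
      F τstar * Real.exp (-Kmax * (τ - τstar)) + ε * (τ - τstar + 1) with hBdef
    set B' : ℝ → ℝ := fun τ =>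
      F τstar * (Real.exp (-Kmax * (τ - τstar)) * (-Kmax)) + ε with hB'def
    have hBd : ∀ τ, HasDerivAt B (B' τ) τ := by
      intro τ
      have h1 : HasDerivAt (fun τ : ℝ => -Kmax * (τ - τstar)) (-Kmax) τ := by
        simpa using (((hasDerivAt_id τ).sub_const τstar).const_mul (-Kmax))
      have h2 := h1.exp
      have h3 := h2.const_mul (F τstar)
      have h4 : HasDerivAt (fun τ : ℝ => ε * (τ - τstar + 1)) ε τ := by
        simpa using ((((hasDerivAt_id τ).sub_const τstar).add_const (1:ℝ)).const_mul ε)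
      exact h3.add h4
    have ha : F τstar ≤ B τstar := by
      simp only [hBdef, sub_self, mul_zero, zero_add, mul_one, Real.exp_zero]
      linarith
    have hbound : ∀ t ∈ Ico τstar T, F t = B t →
        Kmax * (x i (θ + t) - α) < B' t := by
      intro t ht hcontact
      have h1 : Kmax * (x i (θ + t) - α) = -Kmax * F t := by
        show Kmax * (x i (θ + t) - α) = -Kmax * (α - x i (θ + t))
        ring
      rw [h1, hcontact]
      simp only [hBdef, hB'def]
      have hpos : (0:ℝ) < t - τstar + 1 := by linarith [ht.1]
      nlinarith [mul_nonneg hKnn (mul_pos hε hpos).le]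
    exact fun τ hτ =>
      image_le_of_liminf_slope_right_lt_deriv_boundary hFc hf' ha hBd hbound hτ
  intro τ hτ
  have hτθ : τstar ≤ τ := hτ.1
  have hFle : F τ ≤ F τstar * Real.exp (-Kmax * (τ - τstar)) := by
    apply le_of_forall_pos_le_add
    intro ε' hε'
    have hden : (0:ℝ) < τ - τstar + 1 := by linarith
    have h := hmain (ε' / (τ - τstar + 1)) (by positivity) τ hτ
    rwa [div_mul_cancel₀ _ hden.ne'] at h
  have hcross' : F τstar ≤ -(Real.exp (-(Kmax * τstar)) * (z - α)) := by
    rw [hψL] at hcross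
    show α - x i (θ + τstar) ≤ -(Real.exp (-(Kmax * τstar)) * (z - α))
    linarith
  have hexp : Real.exp (-(Kmax * τstar)) * Real.exp (-Kmax * (τ - τstar)) =
      Real.exp (-(Kmax * τ)) := by
    rw [← Real.exp_add]
    ring_nf
  have h2 : F τ ≤ -(Real.exp (-(Kmax * τ)) * (z - α)) := by
    have hstep := mul_le_mul_of_nonneg_right hcross'
      (Real.exp_nonneg (-Kmax * (τ - τstar)))
    calc F τ ≤ F τstar * Real.exp (-Kmax * (τ - τstar)) := hFle
      _ ≤ -(Real.exp (-(Kmax * τstar)) * (z - α)) * Real.exp (-Kmax * (τ - τstar)) := hstep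
      _ = -(Real.exp (-(Kmax * τstar)) * Real.exp (-Kmax * (τ - τstar)) * (z - α)) := by ring
      _ = -(Real.exp (-(Kmax * τ)) * (z - α)) := by rw [hexp]
  rw [hψL]
  have h3 : α - x i (θ + τ) ≤ -(Real.exp (-(Kmax * τ)) * (z - α)) := h2
  linarith
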